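/- Let X ⊆ ℝⁿ be a polyhedral set and ψ(x) = max_{1≤i≤k₁} ψ₁ᵢ(x) − max_{1≤j≤k₂} ψ₂ⱼ(x), where the ψ₁ᵢ are convex quadratic functions and the ψ₂ⱼ are concave quadratic functions. Then the set ψ(D_{(ψ,X)}) of d-stationary values of ψ on X is finite. -/

import Mathlib

open Matrix Filter Topology

noncomputable def finMax {k : ℕ} (hk : 0 < k) (g : Fin k → ℝ) : ℝ :=
  Finset.univ.sup' (Finset.univ_nonempty_iff.mpr ⟨⟨0, hk⟩⟩) g

/-- The one-sided directional derivative of `ψ` at `x` in direction `v` equals `L`. -/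
def HasDirDeriv {n : ℕ} (ψ : (Fin n → ℝ) → ℝ) (x v : Fin n → ℝ) (L : ℝ) : Prop :=
  Filter.Tendsto (fun δ : ℝ => (ψ (x + δ • v) - ψ x) / δ) (nhdsWithin 0 (Set.Ioi 0)) (nhds L)

/-- `x₀` is a d(irectional)-stationary point of `ψ` on `X`. -/
def DStat {n : ℕ} (ψ : (Fin n → ℝ) → ℝ) (X : Set (Fin n → ℝ)) (x₀ : Fin n → ℝ) : Prop :=
  x₀ ∈ X ∧ ∀ x ∈ X, ∃ L, HasDirDeriv ψ x₀ (x - x₀) L ∧ 0 ≤ L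


/-- A polyhedral subset of ℝⁿ: solution set of finitely many linear inequalities. -/
def IsPolyhedral {n : ℕ} (X : Set (Fin n → ℝ)) : Prop :=
  ∃ (m : ℕ) (A : Fin m → Fin n → ℝ) (b : Fin m → ℝ), X = {x | ∀ i, A i ⬝ᵥ x ≤ b i}



-- symmetry of quadratic form
lemma herm_dot {n : ℕ} {Q : Matrix (Fin n) (Fin n) ℝ} (hQ : Q.IsHermitian)
    (w z : Fin n → ℝ) : w ⬝ᵥ Q *ᵥ z = z ⬝ᵥ Q *ᵥ w := by
  have ht : Qᵀ = Q := by
    rw [← Q.conjTranspose_eq_transpose_of_trivial]; exact hQ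
  rw [dotProduct_mulVec, ← ht, vecMul_transpose, dotProduct_comm, ht]

lemma quad_expand {n : ℕ} {Q : Matrix (Fin n) (Fin n) ℝ} (hQ : Q.IsHermitian)
    (q : Fin n → ℝ) (α : ℝ) (x v : Fin n → ℝ) (δ : ℝ) :
    (1/2) * ((x + δ • v) ⬝ᵥ Q *ᵥ (x + δ • v)) + q ⬝ᵥ (x + δ • v) + α
      = ((1/2) * (x ⬝ᵥ Q *ᵥ x) + q ⬝ᵥ x + α) + δ * ((Q *ᵥ x + q) ⬝ᵥ v)
        + δ^2 * ((1/2) * (v ⬝ᵥ Q *ᵥ v)) := by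
  have h1 : v ⬝ᵥ Q *ᵥ x = x ⬝ᵥ Q *ᵥ v := herm_dot hQ v x
  have h2 : (Q *ᵥ x) ⬝ᵥ v = x ⬝ᵥ Q *ᵥ v := by
    rw [dotProduct_comm]; exact (herm_dot hQ v x)
  simp only [mulVec_add, mulVec_smul, dotProduct_add, add_dotProduct, dotProduct_smul,
    smul_dotProduct, smul_eq_mul, add_dotProduct]
  rw [h1, h2]
  ring

lemma sup'_affine {k : ℕ} (s : Finset (Fin k)) (hs : s.Nonempty) (M δ : ℝ) (hδ : 0 ≤ δ)
    (t : Fin k → ℝ) : s.sup' hs (fun i => M + δ * t i) = M + δ * s.sup' hs t := by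
  have := Finset.comp_sup'_eq_sup'_comp hs (f := t) (fun r => M + δ * r) (fun x y => by
    rw [mul_max_of_nonneg _ _ hδ, max_add_add_left])
  exact this.symm

lemma active_nonempty {k : ℕ} (hk : 0 < k) (c : Fin k → ℝ) :
    (Finset.univ.filter (fun i => c i = finMax hk c)).Nonempty := by
  obtain ⟨i, _, hi⟩ := Finset.exists_mem_eq_sup'
    (Finset.univ_nonempty_iff.mpr ⟨(⟨0, hk⟩ : Fin k)⟩) c
  exact ⟨i, Finset.mem_filter.mpr ⟨Finset.mem_univ i, hi.symm⟩⟩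

lemma sup'_active {k : ℕ} (hk : 0 < k) (c : Fin k → ℝ) (f : Fin k → ℝ) :
    (Finset.univ.filter (fun i => c i = finMax hk c)).sup' (active_nonempty hk c) c
      = finMax hk c := by
  rw [Finset.sup'_congr (active_nonempty hk c) rfl
    (fun i hi => (Finset.mem_filter.mp hi).2), Finset.sup'_const]

/-- Key analytic lemma: difference quotient of a max of quadratics in `δ`. -/
lemma lemA {k : ℕ} (hk : 0 < k) (c a b : Fin k → ℝ) :
    Tendsto (fun δ : ℝ =>
        (finMax hk (fun i => c i + δ * a i + δ^2 * b i) - finMax hk c) / δ)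
      (nhdsWithin 0 (Set.Ioi 0))
      (nhds ((Finset.univ.filter (fun i => c i = finMax hk c)).sup'
        (active_nonempty hk c) a)) := by
  set I := Finset.univ.filter (fun i => c i = finMax hk c) with hIdef
  have hI : I.Nonempty := active_nonempty hk c
  set M := finMax hk c with hM
  set G : ℝ → ℝ := fun δ => I.sup' hI (fun i => a i + δ * b i) with hG
  -- G is continuous (tendsto at 0 within the filter)
  have hGt : Tendsto G (nhdsWithin 0 (Set.Ioi 0)) (nhds (I.sup' hI a)) := by
    apply Tendsto.mono_left _ nhdsWithin_le_nhds
    have : Tendsto (fun δ : ℝ => I.sup' hI (fun i => a i + δ * b i)) (nhds 0)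
        (nhds (I.sup' hI (fun i => a i + 0 * b i))) := by
      apply Filter.Tendsto.finset_sup'_nhds_apply hI
      intro i _
      exact (continuous_const.add (continuous_id.mul continuous_const)).tendsto 0
    simpa using this
  -- eventual equality of the difference quotient with G
  have hev : ∀ᶠ δ in nhdsWithin 0 (Set.Ioi 0),
      (finMax hk (fun i => c i + δ * a i + δ^2 * b i) - M) / δ = G δ := by
    -- the sup over the active set tends to M; each inactive term tends below M
    have hsupI : Tendsto (fun δ : ℝ => I.sup' hI (fun i => c i + δ * a i + δ^2 * b i))
        (nhdsWithin 0 (Set.Ioi 0)) (nhds M) := by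
      apply Tendsto.mono_left _ nhdsWithin_le_nhds
      have h0 : I.sup' hI (fun i => c i + 0 * a i + 0^2 * b i) = M := by
        rw [show (fun i => c i + 0 * a i + 0^2 * b i) = c from by funext i; ring]
        exact sup'_active hk c c
      have ht : Tendsto (fun δ : ℝ => I.sup' hI (fun i => c i + δ * a i + δ^2 * b i)) (nhds 0)
          (nhds (I.sup' hI (fun i => c i + 0 * a i + 0^2 * b i))) := by
        apply Filter.Tendsto.finset_sup'_nhds_apply hI
        intro i _
        exact Continuous.tendsto (by continuity) 0
      rw [h0] at ht
      exact ht
    have hdom : ∀ᶠ δ in nhdsWithin 0 (Set.Ioi 0), ∀ i ∈ Finset.univ \ I,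
        c i + δ * a i + δ^2 * b i < I.sup' hI (fun i' => c i' + δ * a i' + δ^2 * b i') := by
      rw [Filter.eventually_all_finset]
      intro i hi
      have hlt : c i < M := by
        rcases Finset.mem_sdiff.mp hi with ⟨-, hni⟩
        have hne : ¬ (c i = M) := fun h => hni (Finset.mem_filter.mpr ⟨Finset.mem_univ i, h⟩)
        exact lt_of_le_of_ne (Finset.le_sup' c (Finset.mem_univ i)) hne
      have hit : Tendsto (fun δ : ℝ => c i + δ * a i + δ^2 * b i)
          (nhdsWithin 0 (Set.Ioi 0)) (nhds (c i)) := by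
        apply Tendsto.mono_left _ nhdsWithin_le_nhds
        have : Tendsto (fun δ : ℝ => c i + δ * a i + δ^2 * b i) (nhds 0)
            (nhds (c i + 0 * a i + 0^2 * b i)) := Continuous.tendsto (by continuity) 0
        simpa using this
      exact hit.eventually_lt hsupI hlt
    filter_upwards [hdom, self_mem_nhdsWithin] with δ hδdom (hδpos : (0:ℝ) < δ)
    have heq : finMax hk (fun i => c i + δ * a i + δ^2 * b i)
        = I.sup' hI (fun i => c i + δ * a i + δ^2 * b i) := by
      apply le_antisymm
      · apply Finset.sup'_le
        intro i _
        by_cases hiI : i ∈ I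
        · exact Finset.le_sup' (fun i => c i + δ * a i + δ^2 * b i) hiI
        · exact (hδdom i (Finset.mem_sdiff.mpr ⟨Finset.mem_univ i, hiI⟩)).le
      · exact Finset.sup'_mono _ (Finset.subset_univ I) hI
    have heq2 : I.sup' hI (fun i => c i + δ * a i + δ^2 * b i) = M + δ * G δ := by
      have hfun : ∀ i ∈ I, c i + δ * a i + δ^2 * b i = M + δ * (a i + δ * b i) := by
        intro i hi
        have hc : c i = M := (Finset.mem_filter.mp hi).2
        rw [hc]; ring
      rw [Finset.sup'_congr hI rfl hfun, sup'_affine I hI M δ hδpos.le]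
    rw [heq, heq2]
    field_simp
    ring
  exact Filter.Tendsto.congr' (Filter.EventuallyEq.symm hev) hGt

lemma quad_grad_ineq {n : ℕ} {Q : Matrix (Fin n) (Fin n) ℝ} (hQ : Q.PosSemidef)
    (q : Fin n → ℝ) (α : ℝ) (x z : Fin n → ℝ) :
    ((1/2) * (x ⬝ᵥ Q *ᵥ x) + q ⬝ᵥ x + α) + ((Q *ᵥ x + q) ⬝ᵥ (z - x))
      ≤ (1/2) * (z ⬝ᵥ Q *ᵥ z) + q ⬝ᵥ z + α := by
  have h := quad_expand hQ.1 q α x (z - x) 1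
  rw [show x + (1:ℝ) • (z - x) = z by simp] at h
  have hpos : 0 ≤ (z - x) ⬝ᵥ Q *ᵥ (z - x) := by simpa using hQ.dotProduct_mulVec_nonneg (z - x)
  rw [h]; nlinarith

lemma neg_herm {n : ℕ} {Q : Matrix (Fin n) (Fin n) ℝ} (h : (-Q).IsHermitian) :
    Q.IsHermitian := by
  have := h.neg
  simpa using this

/-- Proposition 9(a): for `ψ = max_i ψ₁ᵢ - max_j ψ₂ⱼ` with the `ψ₁ᵢ` convex quadratic
(positive semidefinite Hessians) and the `ψ₂ⱼ` concave quadratic (negative semidefinite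
Hessians), the set of d-stationary values of `ψ` on a polyhedral set `X` is finite. -/
theorem stmt_12 {n k₁ k₂ : ℕ} (hk₁ : 0 < k₁) (hk₂ : 0 < k₂)
    (X : Set (Fin n → ℝ)) (hX : IsPolyhedral X)
    (Q₁ : Fin k₁ → Matrix (Fin n) (Fin n) ℝ) (q₁ : Fin k₁ → Fin n → ℝ) (α₁ : Fin k₁ → ℝ)
    (hQ₁ : ∀ i, (Q₁ i).PosSemidef)
    (Q₂ : Fin k₂ → Matrix (Fin n) (Fin n) ℝ) (q₂ : Fin k₂ → Fin n → ℝ) (α₂ : Fin k₂ → ℝ)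
    (hQ₂ : ∀ j, (-(Q₂ j)).PosSemidef)
    (ψ₁ : Fin k₁ → (Fin n → ℝ) → ℝ)
    (hψ₁ : ∀ i x, ψ₁ i x = (1/2) * (x ⬝ᵥ (Q₁ i).mulVec x) + q₁ i ⬝ᵥ x + α₁ i)
    (ψ₂ : Fin k₂ → (Fin n → ℝ) → ℝ)
    (hψ₂ : ∀ j x, ψ₂ j x = (1/2) * (x ⬝ᵥ (Q₂ j).mulVec x) + q₂ j ⬝ᵥ x + α₂ j)
    (ψ : (Fin n → ℝ) → ℝ)
    (hψ : ∀ x, ψ x = finMax hk₁ (fun i => ψ₁ i x) - finMax hk₂ (fun j => ψ₂ j x)) :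
    (ψ '' {x | DStat ψ X x}).Finite := by
  classical
  -- key: minimization property at a d-stationary point
  have key : ∀ x, DStat ψ X x → ∀ j, ψ₂ j x = finMax hk₂ (fun j' => ψ₂ j' x) →
      ∀ z ∈ X, finMax hk₁ (fun i => ψ₁ i x) + ((Q₂ j *ᵥ x + q₂ j) ⬝ᵥ (z - x))
        ≤ finMax hk₁ (fun i => ψ₁ i z) := by
    intro x hx j hj z hz
    obtain ⟨L, hL, hL0⟩ := hx.2 z hz
    set v : Fin n → ℝ := z - x with hv
    set c₁ : Fin k₁ → ℝ := fun i => ψ₁ i x with hc₁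
    set a₁ : Fin k₁ → ℝ := fun i => (Q₁ i *ᵥ x + q₁ i) ⬝ᵥ v with ha₁
    set b₁ : Fin k₁ → ℝ := fun i => (1/2) * (v ⬝ᵥ Q₁ i *ᵥ v) with hb₁
    set c₂ : Fin k₂ → ℝ := fun j' => ψ₂ j' x with hc₂
    set a₂ : Fin k₂ → ℝ := fun j' => (Q₂ j' *ᵥ x + q₂ j') ⬝ᵥ v with ha₂
    set b₂ : Fin k₂ → ℝ := fun j' => (1/2) * (v ⬝ᵥ Q₂ j' *ᵥ v) with hb₂
    have e₁ : ∀ δ : ℝ, ∀ i, ψ₁ i (x + δ • v) = c₁ i + δ * a₁ i + δ^2 * b₁ i := by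
      intro δ i
      rw [hψ₁ i, quad_expand (hQ₁ i).1 (q₁ i) (α₁ i) x v δ, ← hψ₁ i x]
    have e₂ : ∀ δ : ℝ, ∀ j', ψ₂ j' (x + δ • v) = c₂ j' + δ * a₂ j' + δ^2 * b₂ j' := by
      intro δ j'
      rw [hψ₂ j', quad_expand (neg_herm (hQ₂ j').1) (q₂ j') (α₂ j') x v δ, ← hψ₂ j' x]
    set A : ℝ := (Finset.univ.filter (fun i => c₁ i = finMax hk₁ c₁)).sup'
      (active_nonempty hk₁ c₁) a₁ with hA
    set B : ℝ := (Finset.univ.filter (fun j' => c₂ j' = finMax hk₂ c₂)).sup'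
      (active_nonempty hk₂ c₂) a₂ with hB
    have hdd : Tendsto (fun δ : ℝ => (ψ (x + δ • v) - ψ x) / δ)
        (nhdsWithin 0 (Set.Ioi 0)) (nhds (A - B)) := by
      have t := (lemA hk₁ c₁ a₁ b₁).sub (lemA hk₂ c₂ a₂ b₂)
      apply Filter.Tendsto.congr _ t
      intro δ
      rw [hψ (x + δ • v), hψ x]
      have r₁ : (fun i => ψ₁ i (x + δ • v)) = fun i => c₁ i + δ * a₁ i + δ^2 * b₁ i :=
        funext (e₁ δ)
      have r₂ : (fun j' => ψ₂ j' (x + δ • v)) = fun j' => c₂ j' + δ * a₂ j' + δ^2 * b₂ j' :=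
        funext (e₂ δ)
      rw [r₁, r₂, ← hc₁, ← hc₂]
      ring
    have hLAB : L = A - B := tendsto_nhds_unique hL hdd
    have hjmem : j ∈ Finset.univ.filter (fun j' => c₂ j' = finMax hk₂ c₂) :=
      Finset.mem_filter.mpr ⟨Finset.mem_univ j, hj⟩
    have hjB : a₂ j ≤ B := Finset.le_sup' a₂ hjmem
    obtain ⟨i, hiI, hiA⟩ := Finset.exists_mem_eq_sup' (active_nonempty hk₁ c₁) a₁
    have hci : c₁ i = finMax hk₁ c₁ := (Finset.mem_filter.mp hiI).2
    have hconv : ψ₁ i x + a₁ i ≤ ψ₁ i z := by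
      have h := quad_grad_ineq (hQ₁ i) (q₁ i) (α₁ i) x z
      rw [← hψ₁ i x, ← hψ₁ i z, ← hv] at h
      simpa [ha₁] using h
    have hfz : ψ₁ i z ≤ finMax hk₁ (fun i' => ψ₁ i' z) :=
      Finset.le_sup' (fun i' => ψ₁ i' z) (Finset.mem_univ i)
    have ha2j : a₂ j = (Q₂ j *ᵥ x + q₂ j) ⬝ᵥ v := by rw [ha₂]
    have hc1i : c₁ i = ψ₁ i x := by rw [hc₁]
    have hAi : A = a₁ i := by rw [hA]; exact hiA
    linarith [hjB, hL0, hLAB, hAi, hci, hc1i, hconv, hfz, ha2j]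
  -- two stationary points sharing an active j have the same value
  have pair : ∀ x y, DStat ψ X x → DStat ψ X y → ∀ j,
      ψ₂ j x = finMax hk₂ (fun j' => ψ₂ j' x) →
      ψ₂ j y = finMax hk₂ (fun j' => ψ₂ j' y) → ψ x = ψ y := by
    intro x y hx hy j hjx hjy
    have h1 := key x hx j hjx y hy.1
    have h2 := key y hy j hjy x hx.1
    set w : Fin n → ℝ := y - x with hw
    have hxy : x - y = -w := by rw [hw]; abel
    rw [hxy] at h2
    -- derive Q₂ j *ᵥ w = 0
    have hsubw : (-(Q₂ j)) *ᵥ w = (Q₂ j *ᵥ x) - (Q₂ j *ᵥ y) := by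
      rw [hw, Matrix.neg_mulVec, Matrix.mulVec_sub]; abel
    have hqle : w ⬝ᵥ ((-(Q₂ j)) *ᵥ w) ≤ 0 := by
      rw [hsubw, dotProduct_sub, dotProduct_comm w, dotProduct_comm w]
      have e1 : (Q₂ j *ᵥ x + q₂ j) ⬝ᵥ w = (Q₂ j *ᵥ x) ⬝ᵥ w + q₂ j ⬝ᵥ w := add_dotProduct _ _ _
      have e2 : (Q₂ j *ᵥ y + q₂ j) ⬝ᵥ (-w) = -((Q₂ j *ᵥ y) ⬝ᵥ w + q₂ j ⬝ᵥ w) := by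
        rw [dotProduct_neg, add_dotProduct]
      rw [e1] at h1
      rw [e2] at h2
      linarith
    have hqge : 0 ≤ w ⬝ᵥ ((-(Q₂ j)) *ᵥ w) := by simpa using (hQ₂ j).dotProduct_mulVec_nonneg w
    have hz : (-(Q₂ j)) *ᵥ w = 0 :=
      ((hQ₂ j).dotProduct_mulVec_zero_iff w).mp (by simpa using le_antisymm hqle hqge)
    have hQw : Q₂ j *ᵥ w = 0 := by
      rw [Matrix.neg_mulVec, neg_eq_zero] at hz; exact hz
    have hcc : Q₂ j *ᵥ y = Q₂ j *ᵥ x := by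
      have : Q₂ j *ᵥ y - Q₂ j *ᵥ x = 0 := by rw [← Matrix.mulVec_sub, ← hw, hQw]
      exact sub_eq_zero.mp this
    -- value of ψ₂ j at y
    have hyx : y = x + (1:ℝ) • w := by rw [hw]; simp
    have hval : ψ₂ j y = ψ₂ j x + ((Q₂ j *ᵥ x + q₂ j) ⬝ᵥ w) := by
      conv_lhs => rw [hyx]
      rw [hψ₂ j, quad_expand (neg_herm (hQ₂ j).1) (q₂ j) (α₂ j) x w 1, ← hψ₂ j x,
        hQw, dotProduct_zero]
      ring
    -- f values
    have e1 : (Q₂ j *ᵥ x + q₂ j) ⬝ᵥ w = (Q₂ j *ᵥ x) ⬝ᵥ w + q₂ j ⬝ᵥ w := add_dotProduct _ _ _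
    have e2 : (Q₂ j *ᵥ y + q₂ j) ⬝ᵥ (-w) = -((Q₂ j *ᵥ x) ⬝ᵥ w + q₂ j ⬝ᵥ w) := by
      rw [dotProduct_neg, add_dotProduct, hcc]
    rw [e1] at h1
    rw [e2] at h2
    rw [hψ x, hψ y, ← hjx, ← hjy, hval, e1]
    linarith
  -- conclude finiteness
  have hcover : ψ '' {x | DStat ψ X x} ⊆ ⋃ j : Fin k₂,
      ψ '' {x | DStat ψ X x ∧ ψ₂ j x = finMax hk₂ (fun j' => ψ₂ j' x)} := by
    rintro - ⟨x, hx, rfl⟩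
    obtain ⟨j, -, hj⟩ := Finset.exists_mem_eq_sup'
      (Finset.univ_nonempty_iff.mpr ⟨(⟨0, hk₂⟩ : Fin k₂)⟩) (fun j' => ψ₂ j' x)
    exact Set.mem_iUnion.mpr ⟨j, ⟨x, ⟨hx, hj.symm⟩, rfl⟩⟩
  refine Set.Finite.subset (Set.finite_iUnion fun j => Set.Subsingleton.finite ?_) hcover
  rintro - ⟨x, ⟨hx, hjx⟩, rfl⟩ - ⟨y, ⟨hy, hjy⟩, rfl⟩
  exact pair x y hx hy j hjx hjy
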